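/- Let a,b>0, p>6, λ>0, h≥0 a potential. If u∈ℋ_λ with u⁺≢0 and u⁻≢0, then there exists a unique pair (s_u,t_u)∈(0,∞)×(0,∞) such that s_u·u⁺+t_u·u⁻∈M_λ, i.e. (J′_λ(s_uu⁺+t_uu⁻),s_uu⁺)=0 and (J′_λ(s_uu⁺+t_uu⁻),t_uu⁻)=0. -/

import Mathlib

open scoped BigOperators
open Filter

namespace DiscreteKirchhoff

/-- Vertices of the lattice graph ℤ³. -/
abbrev V := Fin 3 → ℤ

/-- Adjacency on ℤ³: x ∼ y iff ∑ᵢ |xᵢ - yᵢ| = 1. -/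
def adj (x y : V) : Prop := (∑ i, |x i - y i|) = 1

instance (x y : V) : Decidable (adj x y) :=
  inferInstanceAs (Decidable ((∑ i, |x i - y i|) = 1))

/-- Graph Laplacian: Δu(x) = ∑_{y∼x} (u(y) - u(x)). -/
noncomputable def lap (u : V → ℝ) (x : V) : ℝ :=
  ∑' y : V, if adj x y then u y - u x else 0

/-- Gradient form: ∇u∇v(x) = (1/2) ∑_{y∼x} (u(y)-u(x))(v(y)-v(x)). -/
noncomputable def gradForm (u v : V → ℝ) (x : V) : ℝ :=
  (1/2) * ∑' y : V, if adj x y then (u y - u x) * (v y - v x) else 0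

/-- |∇u|²(x). -/
noncomputable def gradSq (u : V → ℝ) (x : V) : ℝ := gradForm u u x

/-- Positive part u⁺ = max(u,0). -/
noncomputable def pos (u : V → ℝ) : V → ℝ := fun x => max (u x) 0

/-- Negative part u⁻ = min(u,0). -/
noncomputable def neg (u : V → ℝ) : V → ℝ := fun x => min (u x) 0

/-- K_V(u) = ∑_x ∑_{y∼x} [u⁺(x)u⁻(y) + u⁻(x)u⁺(y)]. -/
noncomputable def KV (u : V → ℝ) : ℝ :=
  ∑' x : V, ∑' y : V, if adj x y then pos u x * neg u y + neg u x * pos u y else 0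

/-- |t|^p log t², taken to be 0 at t = 0. -/
noncomputable def logTerm (p t : ℝ) : ℝ :=
  if t = 0 then 0 else |t| ^ p * Real.log (t ^ 2)

/-- |t|^{p-2} t log t², taken to be 0 at t = 0. -/
noncomputable def nlTerm (p t : ℝ) : ℝ :=
  if t = 0 then 0 else |t| ^ (p - 2) * t * Real.log (t ^ 2)

/-- Membership in the space ℋ_λ (independent of λ > 0). -/
def memH (h u : V → ℝ) : Prop :=
  Summable (fun x => gradSq u x + (u x) ^ 2) ∧ Summable (fun x => h x * (u x) ^ 2)

/-- h_λ(x) = λ h(x) + 1. -/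
noncomputable def hl (lam : ℝ) (h : V → ℝ) (x : V) : ℝ := lam * h x + 1

/-- Squared norm in ℋ_λ. -/
noncomputable def normHlamSq (a lam : ℝ) (h u : V → ℝ) : ℝ :=
  ∑' x : V, (a * gradSq u x + hl lam h x * (u x) ^ 2)

/-- Squared H¹ norm. -/
noncomputable def normH1Sq (u : V → ℝ) : ℝ :=
  ∑' x : V, (gradSq u x + (u x) ^ 2)

/-- Inner product in ℋ_λ. -/
noncomputable def innerHlam (a lam : ℝ) (h u v : V → ℝ) : ℝ :=
  ∑' x : V, (a * gradForm u v x + hl lam h x * u x * v x)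

/-- The energy functional J_λ. -/
noncomputable def Jlam (a b p lam : ℝ) (h u : V → ℝ) : ℝ :=
  (1/2) * normHlamSq a lam h u
  + (b/4) * (∑' x : V, gradSq u x) ^ 2
  + (2/p^2) * ∑' x : V, |u x| ^ p
  - (1/p) * ∑' x : V, logTerm p (u x)

/-- The pairing (J′_λ(u), φ). -/
noncomputable def Jp (a b p lam : ℝ) (h u φ : V → ℝ) : ℝ :=
  (∑' x : V, (a * gradForm u φ x + hl lam h x * u x * φ x))
  + b * (∑' x : V, gradSq u x) * (∑' x : V, gradForm u φ x)
  - ∑' x : V, nlTerm p (u x) * φ x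

/-- The Nehari manifold N_λ. -/
def NSet (a b p lam : ℝ) (h : V → ℝ) : Set (V → ℝ) :=
  {u | memH h u ∧ u ≠ 0 ∧ Jp a b p lam h u u = 0}

/-- The sign-changing Nehari set M_λ. -/
def MSet (a b p lam : ℝ) (h : V → ℝ) : Set (V → ℝ) :=
  {u | memH h u ∧ pos u ≠ 0 ∧ neg u ≠ 0 ∧
       Jp a b p lam h u (pos u) = 0 ∧ Jp a b p lam h u (neg u) = 0}

/-- c_λ = inf_{N_λ} J_λ. -/
noncomputable def cLam (a b p lam : ℝ) (h : V → ℝ) : ℝ :=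
  sInf (Jlam a b p lam h '' NSet a b p lam h)

/-- m_λ = inf_{M_λ} J_λ. -/
noncomputable def mLam (a b p lam : ℝ) (h : V → ℝ) : ℝ :=
  sInf (Jlam a b p lam h '' MSet a b p lam h)

/-- Graph-connectedness of a subset of ℤ³. -/
def connectedIn (S : Set V) : Prop :=
  ∀ x ∈ S, ∀ y ∈ S, Relation.ReflTransGen (fun z w => adj z w ∧ w ∈ S) x y

/-- Hypothesis (h₁): h ≥ 0 and Ω = {h = 0} is nonempty, connected and finite. -/
def hypH1 (h : V → ℝ) : Prop :=
  (∀ x, 0 ≤ h x) ∧ {x | h x = 0}.Nonempty ∧ connectedIn {x | h x = 0} ∧ {x | h x = 0}.Finite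

/-- Hypothesis (h₂): the sublevel set {h < M} is finite for some M > 0. -/
def hypH2 (h : V → ℝ) : Prop :=
  ∃ M > 0, {x | h x < M}.Finite

/-- u solves the discrete logarithmic Kirchhoff equation pointwise on ℤ³. -/
def solvesEq (a b p lam : ℝ) (h u : V → ℝ) : Prop :=
  ∀ x : V, -(a + b * ∑' y : V, gradSq u y) * lap u x + hl lam h x * u x = nlTerm p (u x)

/-- Vertex boundary of a subset of ℤ³. -/
def bdry (S : Set V) : Set V := {y | y ∉ S ∧ ∃ x ∈ S, adj x y}

/-- ℋ¹₀(Ω): functions vanishing outside Ω. -/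
def H10 (S : Set V) : Set (V → ℝ) := {u | ∀ x, x ∉ S → u x = 0}

/-- The energy functional J_Ω. -/
noncomputable def JOm (a b p : ℝ) (S : Set V) (u : V → ℝ) : ℝ :=
  (1/2) * ∑' x : V, (S ∪ bdry S).indicator (fun x => a * gradSq u x) x
  + (1/2) * ∑' x : V, S.indicator (fun x => (u x) ^ 2) x
  + (b/4) * (∑' x : V, (S ∪ bdry S).indicator (gradSq u) x) ^ 2
  + (2/p^2) * ∑' x : V, S.indicator (fun x => |u x| ^ p) x
  - (1/p) * ∑' x : V, S.indicator (fun x => logTerm p (u x)) x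

/-- The pairing (J′_Ω(u), φ). -/
noncomputable def JOmp (a b p : ℝ) (S : Set V) (u φ : V → ℝ) : ℝ :=
  (∑' x : V, (S ∪ bdry S).indicator (fun x => a * gradForm u φ x) x)
  + (∑' x : V, S.indicator (fun x => u x * φ x) x)
  + b * (∑' x : V, (S ∪ bdry S).indicator (gradSq u) x)
      * (∑' x : V, (S ∪ bdry S).indicator (gradForm u φ) x)
  - ∑' x : V, S.indicator (fun x => nlTerm p (u x) * φ x) x

/-- The Nehari manifold N_Ω. -/
def NOm (a b p : ℝ) (S : Set V) : Set (V → ℝ) :=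
  {u | u ∈ H10 S ∧ u ≠ 0 ∧ JOmp a b p S u u = 0}

/-- The sign-changing Nehari set M_Ω. -/
def MOm (a b p : ℝ) (S : Set V) : Set (V → ℝ) :=
  {u | u ∈ H10 S ∧ pos u ≠ 0 ∧ neg u ≠ 0 ∧
       JOmp a b p S u (pos u) = 0 ∧ JOmp a b p S u (neg u) = 0}

/-- c_Ω. -/
noncomputable def cOm (a b p : ℝ) (S : Set V) : ℝ :=
  sInf (JOm a b p S '' NOm a b p S)

/-- m_Ω. -/
noncomputable def mOm (a b p : ℝ) (S : Set V) : ℝ :=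
  sInf (JOm a b p S '' MOm a b p S)

/-- u solves the limiting equation pointwise on Ω. -/
def solvesEqOm (a b p : ℝ) (S : Set V) (u : V → ℝ) : Prop :=
  ∀ x ∈ S, -(a + b * ∑' y : V, (S ∪ bdry S).indicator (gradSq u) y) * lap u x + u x
      = nlTerm p (u x)


/-- The 6 potential neighbors of x. -/
noncomputable def nbr (x : V) : Finset V :=
  Finset.image (fun q : Fin 3 × Bool =>
    fun j => if j = q.1 then x j + (if q.2 then 1 else -1) else x j) Finset.univ

lemma mem_nbr_aux {x y : V} (i : Fin 3) (b : Bool) (hj : ∀ j ≠ i, y j = x j)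
    (hi : y i = x i + (if b then 1 else -1)) : y ∈ nbr x := by
  refine Finset.mem_image.2 ⟨(i, b), Finset.mem_univ _, ?_⟩
  funext j
  by_cases hji : j = i
  · subst hji; simp only [if_pos rfl]; exact hi.symm
  · simp only [if_neg hji]; exact (hj j hji).symm

lemma mem_nbr_of_adj {x y : V} (hxy : adj x y) : y ∈ nbr x := by
  unfold adj at hxy
  rw [Fin.sum_univ_three] at hxy
  rw [Int.abs_eq_natAbs, Int.abs_eq_natAbs, Int.abs_eq_natAbs] at hxy
  have hc : (y 0 = x 0 + 1 ∨ y 0 = x 0 - 1) ∧ y 1 = x 1 ∧ y 2 = x 2 ∨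
      y 0 = x 0 ∧ (y 1 = x 1 + 1 ∨ y 1 = x 1 - 1) ∧ y 2 = x 2 ∨
      y 0 = x 0 ∧ y 1 = x 1 ∧ (y 2 = x 2 + 1 ∨ y 2 = x 2 - 1) := by omega
  clear hxy
  have e0 : ∀ j : Fin 3, j ≠ 0 → j = 1 ∨ j = 2 := by decide
  have e1 : ∀ j : Fin 3, j ≠ 1 → j = 0 ∨ j = 2 := by decide
  have e2 : ∀ j : Fin 3, j ≠ 2 → j = 0 ∨ j = 1 := by decide
  rcases hc with ⟨h0, h1, h2⟩ | ⟨h0, h1, h2⟩ | ⟨h0, h1, h2⟩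
  · rcases h0 with h0 | h0
    · exact mem_nbr_aux 0 true (fun j hj => by rcases e0 j hj with rfl | rfl <;> assumption)
        (by norm_num [h0])
    · exact mem_nbr_aux 0 false (fun j hj => by rcases e0 j hj with rfl | rfl <;> assumption)
        (by norm_num [h0]; omega)
  · rcases h1 with h1 | h1
    · exact mem_nbr_aux 1 true (fun j hj => by rcases e1 j hj with rfl | rfl <;> assumption)
        (by norm_num [h1])
    · exact mem_nbr_aux 1 false (fun j hj => by rcases e1 j hj with rfl | rfl <;> assumption)
        (by norm_num [h1]; omega)
  · rcases h2 with h2 | h2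
    · exact mem_nbr_aux 2 true (fun j hj => by rcases e2 j hj with rfl | rfl <;> assumption)
        (by norm_num [h2])
    · exact mem_nbr_aux 2 false (fun j hj => by rcases e2 j hj with rfl | rfl <;> assumption)
        (by norm_num [h2]; omega)

lemma summable_inner (x : V) (F : V → ℝ) :
    Summable (fun y => if adj x y then F y else 0) := by
  refine summable_of_ne_finset_zero (s := nbr x) (fun y hy => ?_)
  by_cases h : adj x y
  · exact absurd (mem_nbr_of_adj h) hy
  · simp [h]

lemma tsum_ite_mul (x : V) (c : ℝ) (F : V → ℝ) :
    (∑' y : V, if adj x y then c * F y else 0)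
      = c * ∑' y : V, (if adj x y then F y else 0) := by
  rw [← tsum_mul_left]
  congr 1; funext y; split <;> simp

lemma gradSq_nonneg (f : V → ℝ) (x : V) : 0 ≤ gradSq f x := by
  unfold gradSq gradForm
  refine mul_nonneg (by norm_num) (tsum_nonneg fun y => ?_)
  split
  · exact mul_self_nonneg _
  · exact le_refl 0

lemma gradForm_comm (f g : V → ℝ) (x : V) : gradForm f g x = gradForm g f x := by
  unfold gradForm
  congr 1; apply tsum_congr; intro y; split <;> ring

lemma gradForm_combo_left (f g : V → ℝ) (s t : ℝ) (x : V) :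
    gradForm (fun z => s * f z + t * g z) (fun z => s * f z) x
      = s^2 * gradSq f x + (s*t) * gradForm f g x := by
  unfold gradSq gradForm
  have key : ∀ y : V, (if adj x y then
        ((s * f y + t * g y) - (s * f x + t * g x)) * ((s * f y) - (s * f x)) else 0)
      = (if adj x y then s^2 * ((f y - f x) * (f y - f x)) else 0)
        + (if adj x y then (s*t) * ((g y - g x) * (f y - f x)) else 0) := by
    intro y; split <;> ring
  rw [tsum_congr key, Summable.tsum_add (summable_inner x _) (summable_inner x _),
    tsum_ite_mul, tsum_ite_mul]
  have : (∑' y : V, if adj x y then (g y - g x) * (f y - f x) else 0)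
      = ∑' y : V, if adj x y then (f y - f x) * (g y - g x) else 0 := by
    apply tsum_congr; intro y; split <;> ring
  rw [this]; ring

lemma gradSq_combo (f g : V → ℝ) (s t : ℝ) (x : V) :
    gradSq (fun z => s * f z + t * g z) x
      = s^2 * gradSq f x + (2*(s*t)) * gradForm f g x + t^2 * gradSq g x := by
  unfold gradSq gradForm
  have key : ∀ y : V, (if adj x y then
        ((s * f y + t * g y) - (s * f x + t * g x)) * ((s * f y + t * g y) - (s * f x + t * g x)) else 0)
      = (if adj x y then s^2 * ((f y - f x) * (f y - f x)) else 0)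
        + ((if adj x y then (2*(s*t)) * ((f y - f x) * (g y - g x)) else 0)
          + (if adj x y then t^2 * ((g y - g x) * (g y - g x)) else 0)) := by
    intro y; split <;> ring
  rw [tsum_congr key, Summable.tsum_add (summable_inner x _) ((summable_inner x _).add (summable_inner x _)),
    Summable.tsum_add (summable_inner x _) (summable_inner x _), tsum_ite_mul, tsum_ite_mul, tsum_ite_mul]
  ring
lemma pos_nonneg' (u : V → ℝ) (x : V) : 0 ≤ pos u x := le_max_right _ _
lemma neg_nonpos' (u : V → ℝ) (x : V) : neg u x ≤ 0 := min_le_right _ _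

lemma pos_mul_neg (u : V → ℝ) (x : V) : pos u x * neg u x = 0 := by
  unfold pos neg
  rcases le_total (u x) 0 with h | h
  · rw [max_eq_right h, zero_mul]
  · rw [min_eq_right h, mul_zero]

lemma abs_pos_le (u : V → ℝ) (x : V) : |pos u x| ≤ |u x| := by
  unfold pos
  rcases le_total (u x) 0 with h | h
  · rw [max_eq_right h, abs_zero]; exact abs_nonneg _
  · rw [max_eq_left h]

lemma abs_neg_le (u : V → ℝ) (x : V) : |neg u x| ≤ |u x| := by
  unfold neg
  rcases le_total (u x) 0 with h | h
  · rw [min_eq_left h]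
  · rw [min_eq_right h, abs_zero]; exact abs_nonneg _

lemma abs_pos_sub (u : V → ℝ) (x y : V) : |pos u y - pos u x| ≤ |u y - u x| := by
  have h1 := le_abs_self (u y - u x)
  have h2 := neg_abs_le (u y - u x)
  rw [abs_le]; unfold pos
  constructor <;> rcases le_total (u y) 0 with hy | hy <;> rcases le_total (u x) 0 with hx | hx <;>
    simp only [max_eq_right hy, max_eq_left hy, max_eq_right hx, max_eq_left hx] <;> linarith

lemma abs_neg_sub (u : V → ℝ) (x y : V) : |neg u y - neg u x| ≤ |u y - u x| := by
  have h1 := le_abs_self (u y - u x)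
  have h2 := neg_abs_le (u y - u x)
  rw [abs_le]; unfold neg
  constructor <;> rcases le_total (u y) 0 with hy | hy <;> rcases le_total (u x) 0 with hx | hx <;>
    simp only [min_eq_right hy, min_eq_left hy, min_eq_right hx, min_eq_left hx] <;> linarith

lemma gradSq_le_of_abs_sub (f u : V → ℝ) (hf : ∀ x y, |f y - f x| ≤ |u y - u x|) (x : V) :
    gradSq f x ≤ gradSq u x := by
  unfold gradSq gradForm
  refine mul_le_mul_of_nonneg_left
    (Summable.tsum_le_tsum (fun y => ?_) (summable_inner x _) (summable_inner x _)) (by norm_num)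
  split
  · have e1 : (f y - f x) * (f y - f x) = |f y - f x| * |f y - f x| := by rw [abs_mul_abs_self]
    have e2 : (u y - u x) * (u y - u x) = |u y - u x| * |u y - u x| := by
      rw [abs_mul_abs_self]
    rw [e1, e2]
    exact mul_self_le_mul_self (abs_nonneg _) (hf x y)
  · exact le_refl 0

lemma gradSq_pos_le (u : V → ℝ) (x : V) : gradSq (pos u) x ≤ gradSq u x :=
  gradSq_le_of_abs_sub _ _ (abs_pos_sub u) x

lemma gradSq_neg_le (u : V → ℝ) (x : V) : gradSq (neg u) x ≤ gradSq u x :=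
  gradSq_le_of_abs_sub _ _ (abs_neg_sub u) x

lemma gradForm_pn_nonneg (u : V → ℝ) (x : V) : 0 ≤ gradForm (pos u) (neg u) x := by
  unfold gradForm
  refine mul_nonneg (by norm_num) (tsum_nonneg fun y => ?_)
  split
  · have e : (pos u y - pos u x) * (neg u y - neg u x)
        = pos u y * (-neg u x) + pos u x * (-neg u y)
          + pos u y * neg u y + pos u x * neg u x := by ring
    rw [e, pos_mul_neg, pos_mul_neg]
    have n1 : (0:ℝ) ≤ pos u y * (-neg u x) :=
      mul_nonneg (pos_nonneg' u y) (by linarith [neg_nonpos' u x])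
    have n2 : (0:ℝ) ≤ pos u x * (-neg u y) :=
      mul_nonneg (pos_nonneg' u x) (by linarith [neg_nonpos' u y])
    linarith
  · exact le_refl 0

lemma gradForm_pn_le (u : V → ℝ) (x : V) :
    gradForm (pos u) (neg u) x ≤ gradSq (pos u) x + gradSq (neg u) x := by
  unfold gradSq gradForm
  rw [← mul_add, ← Summable.tsum_add (summable_inner x _) (summable_inner x _)]
  refine mul_le_mul_of_nonneg_left
    (Summable.tsum_le_tsum (fun y => ?_) (summable_inner x _) ((summable_inner x _).add (summable_inner x _))) (by norm_num)
  by_cases hadj : adj x y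
  · simp only [if_pos hadj]
    nlinarith [sq_nonneg ((pos u y - pos u x) - (neg u y - neg u x)),
      sq_nonneg ((pos u y - pos u x) + (neg u y - neg u x))]
  · simp only [if_neg hadj]; norm_num
section Summables

variable {h u : V → ℝ} {lam : ℝ}

lemma summable_u2 (hu : memH h u) : Summable (fun x => (u x)^2) :=
  Summable.of_nonneg_of_le (fun x => sq_nonneg _)
    (fun x => le_add_of_nonneg_left (gradSq_nonneg u x)) hu.1

lemma summable_gradSq (hu : memH h u) : Summable (fun x => gradSq u x) :=
  Summable.of_nonneg_of_le (fun x => gradSq_nonneg u x)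
    (fun x => le_add_of_nonneg_right (sq_nonneg _)) hu.1

lemma summable_gradSq_pos (hu : memH h u) : Summable (fun x => gradSq (pos u) x) :=
  Summable.of_nonneg_of_le (fun x => gradSq_nonneg _ x) (fun x => gradSq_pos_le u x)
    (summable_gradSq hu)

lemma summable_gradSq_neg (hu : memH h u) : Summable (fun x => gradSq (neg u) x) :=
  Summable.of_nonneg_of_le (fun x => gradSq_nonneg _ x) (fun x => gradSq_neg_le u x)
    (summable_gradSq hu)

lemma summable_gradForm_pn (hu : memH h u) : Summable (fun x => gradForm (pos u) (neg u) x) :=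
  Summable.of_nonneg_of_le (fun x => gradForm_pn_nonneg u x) (fun x => gradForm_pn_le u x)
    ((summable_gradSq_pos hu).add (summable_gradSq_neg hu))

lemma sq_le_sq_of_abs_le {x y : ℝ} (hxy : |x| ≤ |y|) : x^2 ≤ y^2 := by
  rw [← sq_abs x, ← sq_abs y]
  exact pow_le_pow_left₀ (abs_nonneg _) hxy 2

lemma summable_hl_sq (hlam : 0 < lam) (hh : ∀ x, 0 ≤ h x) (hu : memH h u)
    (f : V → ℝ) (hf : ∀ x, |f x| ≤ |u x|) :
    Summable (fun x => hl lam h x * (f x)^2) := by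
  have hsum : Summable (fun x => lam * (h x * (u x)^2) + (u x)^2) :=
    ((hu.2).mul_left lam).add (summable_u2 hu)
  refine Summable.of_nonneg_of_le (fun x => ?_) (fun x => ?_) hsum
  · exact mul_nonneg (by unfold hl; nlinarith [hh x, hlam.le]) (sq_nonneg _)
  · have hsq : (f x)^2 ≤ (u x)^2 := sq_le_sq_of_abs_le (hf x)
    unfold hl
    have h1 : h x * (f x)^2 ≤ h x * (u x)^2 := mul_le_mul_of_nonneg_left hsq (hh x)
    nlinarith [hh x, hlam, sq_nonneg (f x), mul_le_mul_of_nonneg_left h1 hlam.le]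

lemma eventually_abs_lt_one (hu : memH h u) : ∀ᶠ x in cofinite, |u x| < 1 := by
  have := (summable_u2 hu).tendsto_cofinite_zero
  filter_upwards [this.eventually (gt_mem_nhds one_pos)] with x hx
  nlinarith [abs_nonneg (u x), sq_abs (u x)]

lemma summable_abs_rpow {p : ℝ} (hp : 6 < p) (hu : memH h u)
    (f : V → ℝ) (hf : ∀ x, |f x| ≤ |u x|) :
    Summable (fun x => |f x| ^ p) := by
  refine Summable.of_norm_bounded_eventually (summable_u2 hu) ?_
  filter_upwards [eventually_abs_lt_one hu] with x hx
  have hfx1 : |f x| < 1 := lt_of_le_of_lt (hf x) hx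
  rw [Real.norm_eq_abs, abs_of_nonneg (Real.rpow_nonneg (abs_nonneg _) p)]
  rcases eq_or_lt_of_le (abs_nonneg (f x)) with h0 | h0
  · rw [← h0, Real.zero_rpow (by positivity)]
    exact sq_nonneg _
  · calc |f x| ^ p ≤ |f x| ^ (2:ℝ) :=
          Real.rpow_le_rpow_of_exponent_ge h0 hfx1.le (by linarith)
      _ = (f x)^2 := by rw [show (2:ℝ) = ((2:ℕ):ℝ) by norm_num, Real.rpow_natCast, sq_abs]
      _ ≤ (u x)^2 := sq_le_sq_of_abs_le (hf x)

lemma summable_logTerm {p : ℝ} (hp : 6 < p) (hu : memH h u)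
    (f : V → ℝ) (hf : ∀ x, |f x| ≤ |u x|) :
    Summable (fun x => logTerm p (f x)) := by
  refine Summable.of_norm_bounded_eventually
    ((summable_u2 hu).mul_left 2) ?_
  filter_upwards [eventually_abs_lt_one hu] with x hx
  have hfx1 : |f x| < 1 := lt_of_le_of_lt (hf x) hx
  unfold logTerm
  by_cases hf0 : f x = 0
  · rw [if_pos hf0, norm_zero]; positivity
  · rw [if_neg hf0]
    have hw : 0 < |f x| := abs_pos.2 hf0
    have hlog : Real.log ((f x)^2) = 2 * Real.log |f x| := by
      rw [← sq_abs, Real.log_pow]; norm_num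
    have hlneg : Real.log |f x| < 0 := Real.log_neg hw hfx1
    have hval : |f x| ^ p * Real.log ((f x)^2) = -(|f x| ^ p * (2 * -Real.log |f x|)) := by
      rw [hlog]; ring
    have hwp : (0:ℝ) ≤ |f x| ^ p := Real.rpow_nonneg (abs_nonneg _) p
    rw [Real.norm_eq_abs, hval, abs_neg,
      abs_of_nonneg (mul_nonneg hwp (by linarith))]
    have hb1 : -Real.log |f x| ≤ |f x|⁻¹ := by
      have := Real.log_le_sub_one_of_pos (inv_pos.2 hw)
      rw [Real.log_inv] at this
      nlinarith [inv_pos.2 hw]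
    have hstep : |f x| ^ p * (2 * -Real.log |f x|) ≤ |f x| ^ p * (2 * |f x|⁻¹) :=
      mul_le_mul_of_nonneg_left (by linarith) hwp
    have hkey : |f x| ^ p * (2 * |f x|⁻¹) = 2 * |f x| ^ (p - 1) := by
      rw [Real.rpow_sub_one (ne_of_gt hw)]
      field_simp
    have hineq : |f x| ^ (p-1) ≤ (u x)^2 := by
      calc |f x| ^ (p-1) ≤ |f x| ^ (2:ℝ) :=
            Real.rpow_le_rpow_of_exponent_ge hw hfx1.le (by linarith)
        _ = (f x)^2 := by rw [show (2:ℝ) = ((2:ℕ):ℝ) by norm_num, Real.rpow_natCast, sq_abs]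
        _ ≤ (u x)^2 := sq_le_sq_of_abs_le (hf x)
    calc |f x| ^ p * (2 * -Real.log |f x|) ≤ 2 * |f x| ^ (p-1) := by
          rw [← hkey]; exact hstep
      _ ≤ 2 * (u x)^2 := by linarith

end Summables
lemma nl_pointwise {p s t : ℝ} (hs : 0 < s) (hp0 : p ≠ 0) (f g : V → ℝ)
    (hfg : ∀ x, f x * g x = 0) (x : V) :
    nlTerm p (s * f x + t * g x) * (s * f x)
      = s ^ p * (2 * Real.log s * |f x| ^ p + logTerm p (f x)) := by
  by_cases hf : f x = 0
  · rw [hf]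
    unfold logTerm
    rw [if_pos rfl, abs_zero, Real.zero_rpow hp0]
    ring
  · have hg : g x = 0 := by
      rcases mul_eq_zero.1 (hfg x) with h0 | h0
      · exact absurd h0 hf
      · exact h0
    rw [hg, mul_zero, add_zero]
    have hsv : s * f x ≠ 0 := mul_ne_zero (ne_of_gt hs) hf
    unfold nlTerm logTerm
    rw [if_neg hsv, if_neg hf]
    have habs : |s * f x| = s * |f x| := by rw [abs_mul, abs_of_pos hs]
    have hav : 0 < |f x| := abs_pos.2 hf
    have hsva : 0 < |s * f x| := by rw [habs]; positivity
    have key1 : |s * f x| ^ (p-2) * ((s * f x) * (s * f x)) = s ^ p * |f x| ^ p := by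
      have e1 : (s * f x) * (s * f x) = |s * f x| * |s * f x| := by
        rw [abs_mul_abs_self]
      rw [e1, show |s * f x| * |s * f x| = |s * f x| ^ (2:ℝ) by
          rw [show (2:ℝ) = ((2:ℕ):ℝ) by norm_num, Real.rpow_natCast]; ring,
        ← Real.rpow_add hsva, sub_add_cancel, habs,
        Real.mul_rpow hs.le (abs_nonneg _)]
    have key2 : Real.log ((s * f x)^2) = 2 * Real.log s + Real.log ((f x)^2) := by
      rw [mul_pow, Real.log_mul (by positivity) (by positivity), Real.log_pow]
      norm_num
    calc |s * f x| ^ (p-2) * (s * f x) * Real.log ((s * f x)^2) * (s * f x)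
        = |s * f x| ^ (p-2) * ((s * f x) * (s * f x)) * Real.log ((s * f x)^2) := by ring
      _ = s ^ p * |f x| ^ p * (2 * Real.log s + Real.log ((f x)^2)) := by rw [key1, key2]
      _ = s ^ p * (2 * Real.log s * |f x| ^ p + |f x| ^ p * Real.log ((f x)^2)) := by ring

/-- Master expansion of the pairing along s·f + t·g against s·f. -/
lemma Jp_expand (a b p lam s t : ℝ) (hs : 0 < s) (ht : 0 < t) (hp0 : p ≠ 0)
    (h f g : V → ℝ) (hfg : ∀ x, f x * g x = 0)
    (Sa : Summable (fun x => a * gradSq f x + hl lam h x * (f x)^2))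
    (Sb : Summable (fun x => gradForm f g x))
    (Sc : Summable (fun x => gradSq f x))
    (Sd : Summable (fun x => gradSq g x))
    (Se : Summable (fun x => |f x| ^ p))
    (Sf : Summable (fun x => logTerm p (f x))) :
    Jp a b p lam h (fun x => s * f x + t * g x) (fun x => s * f x)
      = s^2 * (∑' x : V, (a * gradSq f x + hl lam h x * (f x)^2))
        + (s*t) * a * (∑' x : V, gradForm f g x)
        + b * (s^2 * (∑' x : V, gradSq f x) + (2*(s*t)) * (∑' x : V, gradForm f g x)
              + t^2 * (∑' x : V, gradSq g x))
            * (s^2 * (∑' x : V, gradSq f x) + (s*t) * (∑' x : V, gradForm f g x))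
        - s ^ p * (2 * Real.log s * (∑' x : V, |f x| ^ p) + (∑' x : V, logTerm p (f x))) := by
  unfold Jp
  have T1 : (∑' x : V, (a * gradForm (fun z => s * f z + t * g z) (fun z => s * f z) x
        + hl lam h x * (s * f x + t * g x) * (s * f x)))
      = s^2 * (∑' x : V, (a * gradSq f x + hl lam h x * (f x)^2))
        + (s*t) * a * (∑' x : V, gradForm f g x) := by
    have key : ∀ x : V, (a * gradForm (fun z => s * f z + t * g z) (fun z => s * f z) x
          + hl lam h x * (s * f x + t * g x) * (s * f x))
        = s^2 * (a * gradSq f x + hl lam h x * (f x)^2)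
          + ((s*t) * a) * gradForm f g x := by
      intro x
      rw [gradForm_combo_left]
      have : hl lam h x * (s * f x + t * g x) * (s * f x)
          = s^2 * (hl lam h x * (f x)^2) + (s*t) * hl lam h x * (f x * g x) := by ring
      rw [this, hfg x]
      ring
    rw [tsum_congr key, Summable.tsum_add (Sa.mul_left _) (Sb.mul_left _), tsum_mul_left, tsum_mul_left]
  have T2 : (∑' x : V, gradSq (fun z => s * f z + t * g z) x)
      = s^2 * (∑' x : V, gradSq f x) + (2*(s*t)) * (∑' x : V, gradForm f g x)
        + t^2 * (∑' x : V, gradSq g x) := by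
    rw [tsum_congr (gradSq_combo f g s t),
      Summable.tsum_add ((Sc.mul_left _).add (Sb.mul_left _)) (Sd.mul_left _),
      Summable.tsum_add (Sc.mul_left _) (Sb.mul_left _), tsum_mul_left, tsum_mul_left, tsum_mul_left]
  have T3 : (∑' x : V, gradForm (fun z => s * f z + t * g z) (fun z => s * f z) x)
      = s^2 * (∑' x : V, gradSq f x) + (s*t) * (∑' x : V, gradForm f g x) := by
    rw [tsum_congr (gradForm_combo_left f g s t),
      Summable.tsum_add (Sc.mul_left _) (Sb.mul_left _), tsum_mul_left, tsum_mul_left]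
  have T4 : (∑' x : V, nlTerm p (s * f x + t * g x) * (s * f x))
      = s ^ p * (2 * Real.log s * (∑' x : V, |f x| ^ p) + (∑' x : V, logTerm p (f x))) := by
    rw [tsum_congr (nl_pointwise hs hp0 f g hfg)]
    rw [tsum_mul_left, Summable.tsum_add (Se.mul_left _) Sf, tsum_mul_left]
  rw [T1, T2, T3, T4]

/-- The reduced fibering functional component. -/
noncomputable def Fgen (b p α A B c γ gA gB s t : ℝ) : ℝ :=
  s^2*α + (s*t)*c + b*(s^2*gA + 2*(s*t)*γ + t^2*gB)*(s^2*gA + (s*t)*γ)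
    - s ^ p * (2*A*Real.log s + B)

/-- Its s-derivative divided structure. -/
noncomputable def Fd (b p α A B c γ gA gB s t : ℝ) : ℝ :=
  s*α + t*c + b*(s^2*gA + 2*(s*t)*γ + t^2*gB)*(s*gA + t*γ)
    - s ^ (p-1) * (2*A*Real.log s + B)

/-- The reduced energy on the quadrant. -/
noncomputable def Phi (b p α₁ α₂ A₁ A₂ B₁ B₂ c γ g₁ g₂ s t : ℝ) : ℝ :=
  (1/2)*s^2*α₁ + (1/2)*t^2*α₂ + (s*t)*c
  + (b/4)*(s^2*g₁ + 2*(s*t)*γ + t^2*g₂)^2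
  + (2/p^2)*(s ^ p * A₁ + t ^ p * A₂)
  - (1/p)*(s ^ p * (2*A₁*Real.log s + B₁) + t ^ p * (2*A₂*Real.log t + B₂))

lemma Phi_swap (b p α₁ α₂ A₁ A₂ B₁ B₂ c γ g₁ g₂ s t : ℝ) :
    Phi b p α₁ α₂ A₁ A₂ B₁ B₂ c γ g₁ g₂ s t
      = Phi b p α₂ α₁ A₂ A₁ B₂ B₁ c γ g₂ g₁ t s := by
  unfold Phi; ring

lemma rpow_split {s p : ℝ} (hs : 0 < s) : s ^ p = s ^ (p-1) * s := by
  rw [Real.rpow_sub_one hs.ne']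
  field_simp

lemma Fgen_eq_mul {b p α A B c γ gA gB s t : ℝ} (hs : 0 < s) :
    Fgen b p α A B c γ gA gB s t = s * Fd b p α A B c γ gA gB s t := by
  unfold Fgen Fd
  rw [rpow_split hs]
  ring

lemma hasDerivAt_Phi (b p α₁ α₂ A₁ A₂ B₁ B₂ c γ g₁ g₂ t : ℝ) {s : ℝ}
    (hs : 0 < s) (hp0 : p ≠ 0) :
    HasDerivAt (fun σ => Phi b p α₁ α₂ A₁ A₂ B₁ B₂ c γ g₁ g₂ σ t)
      (Fd b p α₁ A₁ B₁ c γ g₁ g₂ s t) s := by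
  have hrp : HasDerivAt (fun σ : ℝ => σ ^ p) (p * s^(p-1)) s :=
    Real.hasDerivAt_rpow_const (Or.inl hs.ne')
  have hlg : HasDerivAt Real.log s⁻¹ s := Real.hasDerivAt_log hs.ne'
  have hQ : HasDerivAt (fun σ : ℝ => σ^2*g₁ + 2*(σ*t)*γ + t^2*g₂)
      ((2*s^1)*g₁ + (2*t)*γ) s := by
    have h1 : HasDerivAt (fun σ : ℝ => σ^2*g₁) ((2*s^1)*g₁) s :=
      (hasDerivAt_pow 2 s).mul_const g₁
    have h2 : HasDerivAt (fun σ : ℝ => 2*(σ*t)*γ) ((2*t)*γ) s := by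
      have := (((hasDerivAt_id s).mul_const t).const_mul 2).mul_const γ
      simpa using this
    simpa using (h1.add h2).add_const (t^2*g₂)
  have hF : HasDerivAt (fun σ : ℝ =>
      (1/2)*(σ^2*α₁) + (σ*t)*c + (b/4)*((σ^2*g₁ + 2*(σ*t)*γ + t^2*g₂)^2)
        + (2/p^2)*(σ ^ p*A₁) - (1/p)*((2*A₁)*(σ ^ p*Real.log σ)) - (1/p)*(B₁*σ ^ p)
        + ((1/2)*t^2*α₂ + (2/p^2)*(t ^ p * A₂) - (1/p)*(t ^ p*(2*A₂*Real.log t + B₂))))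
      ((1/2)*((2*s^1)*α₁) + (1*t)*c
        + (b/4)*(2*(s^2*g₁ + 2*(s*t)*γ + t^2*g₂)^1*((2*s^1)*g₁ + (2*t)*γ))
        + (2/p^2)*((p*s^(p-1))*A₁)
        - (1/p)*((2*A₁)*((p*s^(p-1))*Real.log s + s ^ p * s⁻¹))
        - (1/p)*(B₁*(p*s^(p-1)))) s := by
    have hQ2 : HasDerivAt (fun σ : ℝ => (σ^2*g₁ + 2*(σ*t)*γ + t^2*g₂)^2)
        (2*(s^2*g₁ + 2*(s*t)*γ + t^2*g₂)^1*((2*s^1)*g₁ + (2*t)*γ)) s := hQ.pow 2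
    have step1 := ((hasDerivAt_pow 2 s).mul_const α₁).const_mul (1/2)
    have step2 := ((hasDerivAt_id s).mul_const t).mul_const c
    have step3 := hQ2.const_mul (b/4)
    have step4 := (hrp.mul_const A₁).const_mul (2/p^2)
    have step5 := ((hrp.mul hlg).const_mul (2*A₁)).const_mul (1/p)
    have step6 := (hrp.const_mul B₁).const_mul (1/p)
    exact (((((step1.add step2).add step3).add step4).sub step5).sub step6).add_const _
  have hfun : (fun σ => Phi b p α₁ α₂ A₁ A₂ B₁ B₂ c γ g₁ g₂ σ t)
      = (fun σ : ℝ =>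
      (1/2)*(σ^2*α₁) + (σ*t)*c + (b/4)*((σ^2*g₁ + 2*(σ*t)*γ + t^2*g₂)^2)
        + (2/p^2)*(σ ^ p*A₁) - (1/p)*((2*A₁)*(σ ^ p*Real.log σ)) - (1/p)*(B₁*σ ^ p)
        + ((1/2)*t^2*α₂ + (2/p^2)*(t ^ p * A₂) - (1/p)*(t ^ p*(2*A₂*Real.log t + B₂)))) := by
    funext σ; unfold Phi; ring
  rw [hfun]
  convert hF using 1
  unfold Fd
  have hX : s ^ p = s ^ (p-1) * s := rpow_split hs
  rw [hX]
  field_simp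
  ring
lemma Fd_pos {b p α A B c γ gA gB : ℝ} (hb : 0 < b) (hα : 0 < α) (hA : 0 < A)
    (hc : 0 ≤ c) (hγ : 0 ≤ γ) (hgA : 0 ≤ gA) (hgB : 0 ≤ gB)
    {s t : ℝ} (hs : 0 < s) (hslt : s < Real.exp (-B/(2*A))) (ht : 0 ≤ t) :
    0 < Fd b p α A B c γ gA gB s t := by
  unfold Fd
  have hlog : Real.log s < -B/(2*A) := by
    calc Real.log s < Real.log (Real.exp (-B/(2*A))) := Real.log_lt_log hs hslt
      _ = -B/(2*A) := Real.log_exp _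
  have h2A : (0:ℝ) < 2*A := by linarith
  have hbr : 2*A*Real.log s + B < 0 := by
    have h1 := mul_lt_mul_of_pos_left hlog h2A
    have e : 2*A*(-B/(2*A)) = -B := by field_simp
    rw [e] at h1
    linarith
  have hrp : 0 < s^(p-1) := Real.rpow_pos_of_pos hs _
  have hQ : 0 ≤ s^2*gA + 2*(s*t)*γ + t^2*gB :=
    add_nonneg (add_nonneg (mul_nonneg (sq_nonneg s) hgA)
      (mul_nonneg (mul_nonneg (by norm_num) (mul_nonneg hs.le ht)) hγ))
      (mul_nonneg (sq_nonneg t) hgB)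
  have hR : 0 ≤ s*gA + t*γ := add_nonneg (mul_nonneg hs.le hgA) (mul_nonneg ht hγ)
  have hQR : 0 ≤ b*(s^2*gA + 2*(s*t)*γ + t^2*gB)*(s*gA + t*γ) :=
    mul_nonneg (mul_nonneg hb.le hQ) hR
  have htc : 0 ≤ t*c := mul_nonneg ht hc
  nlinarith [mul_pos hs hα, mul_pos hrp (neg_pos.2 hbr)]

lemma Fd_neg {b p α A B c γ gA gB : ℝ} (hb : 0 < b) (hp : 6 < p) (hα : 0 < α) (hA : 0 < A)
    (hc : 0 ≤ c) (hγ : 0 ≤ γ) (hgA : 0 ≤ gA) (hgB : 0 ≤ gB)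
    {R₀ : ℝ} (hR₀1 : 1 ≤ R₀) (hR₀log : A ≤ 2*A*Real.log R₀ + B)
    (hR₀big : 8*((α+c) + b*((gA+2*γ+gB)*(gA+γ))) < R₀^(p-4)*A)
    {s t : ℝ} (hsR₀ : R₀ ≤ s) (hsR : s ≤ 2*R₀) (ht0 : 0 ≤ t) (htR : t ≤ 2*R₀) :
    Fd b p α A B c γ gA gB s t < 0 := by
  have hR₀ : (0:ℝ) < R₀ := lt_of_lt_of_le one_pos hR₀1
  have hs : 0 < s := lt_of_lt_of_le hR₀ hsR₀
  unfold Fd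
  set R := 2*R₀ with hR
  have hRpos : 0 < R := by positivity
  -- positive part bound
  have hposbound : s*α + t*c + b*(s^2*gA + 2*(s*t)*γ + t^2*gB)*(s*gA + t*γ)
      ≤ 8*R₀^3*((α+c) + b*((gA+2*γ+gB)*(gA+γ))) := by
    have hsR' : s ≤ R := hsR
    have htR' : t ≤ R := htR
    have hQle : s^2*gA + 2*(s*t)*γ + t^2*gB ≤ R^2*(gA+2*γ+gB) := by
      have h1 : s^2 ≤ R^2 := by nlinarith
      have h2 : s*t ≤ R^2 := by nlinarith
      have h3 : t^2 ≤ R^2 := by nlinarith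
      have k1 := mul_le_mul_of_nonneg_right h1 hgA
      have k2 := mul_le_mul_of_nonneg_right h2 hγ
      have k3 := mul_le_mul_of_nonneg_right h3 hgB
      linarith
    have hRle : s*gA + t*γ ≤ R*(gA+γ) := by
      have k1 := mul_le_mul_of_nonneg_right hsR' hgA
      have k2 := mul_le_mul_of_nonneg_right htR' hγ
      linarith
    have hQ0 : 0 ≤ s^2*gA + 2*(s*t)*γ + t^2*gB :=
      add_nonneg (add_nonneg (mul_nonneg (sq_nonneg s) hgA)
        (mul_nonneg (mul_nonneg (by norm_num) (mul_nonneg hs.le ht0)) hγ))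
        (mul_nonneg (sq_nonneg t) hgB)
    have hR0' : 0 ≤ s*gA + t*γ := add_nonneg (mul_nonneg hs.le hgA) (mul_nonneg ht0 hγ)
    have hQR2 : 0 ≤ R^2*(gA+2*γ+gB) := le_trans hQ0 hQle
    have hprod0 : (s^2*gA + 2*(s*t)*γ + t^2*gB)*(s*gA + t*γ)
        ≤ (R^2*(gA+2*γ+gB))*(R*(gA+γ)) := mul_le_mul hQle hRle hR0' hQR2
    have hprod : b*((s^2*gA + 2*(s*t)*γ + t^2*gB)*(s*gA + t*γ))
        ≤ b*((R^2*(gA+2*γ+gB))*(R*(gA+γ))) := mul_le_mul_of_nonneg_left hprod0 hb.le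
    have h1 : s*α ≤ R*α := mul_le_mul_of_nonneg_right hsR' hα.le
    have h2 : t*c ≤ R*c := mul_le_mul_of_nonneg_right htR' hc
    have hR1 : (1:ℝ) ≤ R := by rw [hR]; linarith
    have hRR3 : R ≤ R^3 := by nlinarith
    have hRcube : R*(α+c) ≤ R^3*(α+c) :=
      mul_le_mul_of_nonneg_right hRR3 (add_nonneg hα.le hc)
    have e : b*((R^2*(gA+2*γ+gB))*(R*(gA+γ))) = R^3*(b*((gA+2*γ+gB)*(gA+γ))) := by ring
    have e2 : (8:ℝ)*R₀^3 = R^3 := by rw [hR]; ring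
    have e3 : 8*R₀^3*((α+c) + b*((gA+2*γ+gB)*(gA+γ)))
        = R^3*(α+c) + R^3*(b*((gA+2*γ+gB)*(gA+γ))) := by rw [hR]; ring
    linarith [hprod, e, e3]
  -- negative part bound
  have hlogmono : Real.log R₀ ≤ Real.log s := Real.log_le_log hR₀ hsR₀
  have hbrs : A ≤ 2*A*Real.log s + B := by nlinarith
  have hrplb : R₀^(p-1) ≤ s^(p-1) := Real.rpow_le_rpow hR₀.le hsR₀ (by linarith)
  have hnl : R₀^(p-1)*A ≤ s^(p-1)*(2*A*Real.log s + B) :=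
    mul_le_mul hrplb hbrs hA.le (Real.rpow_nonneg hs.le _)
  have hsplit : R₀^(p-1) = R₀^(p-4)*R₀^3 := by
    rw [show R₀^(3:ℕ) = R₀^((3:ℕ):ℝ) from (Real.rpow_natCast R₀ 3).symm,
      ← Real.rpow_add hR₀]
    congr 1
    ring
  have hR₀3 : (0:ℝ) < R₀^3 := by positivity
  have hfinal : 8*R₀^3*((α+c) + b*((gA+2*γ+gB)*(gA+γ))) < R₀^(p-1)*A := by
    rw [hsplit]
    have := mul_lt_mul_of_pos_left hR₀big hR₀3
    linarith [this]
  linarith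
set_option maxHeartbeats 1000000 in
lemma Fgen_inj {b p α A B c γ gA gB : ℝ} (hb : 0 < b) (hp : 6 < p) (hα : 0 < α) (hA : 0 < A)
    (hc : 0 ≤ c) (hγ : 0 ≤ γ) (hgA : 0 ≤ gA) (hgB : 0 ≤ gB)
    {s₁ t₁ s₂ t₂ : ℝ} (hs₁ : 0 < s₁) (ht₁ : 0 < t₁) (hs₂ : 0 < s₂) (ht₂ : 0 < t₂)
    (h1 : Fgen b p α A B c γ gA gB s₁ t₁ = 0) (h2 : Fgen b p α A B c γ gA gB s₂ t₂ = 0)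
    (hss : s₁ ≤ s₂) (hts : t₂*s₁ ≤ t₁*s₂) : s₂ ≤ s₁ := by
  by_contra hcon
  push_neg at hcon
  set k := s₂/s₁ with hkdef
  have hk : 1 < k := (one_lt_div hs₁).2 hcon
  have hk0 : 0 < k := lt_trans one_pos hk
  have hs2k : s₂ = k*s₁ := by rw [hkdef, div_mul_cancel₀ _ hs₁.ne']
  have ht2k : t₂ ≤ k*t₁ := by
    rw [hs2k] at hts
    have := (mul_le_mul_iff_left₀ hs₁).1 (by linarith [hts] : t₂*s₁ ≤ (k*t₁)*s₁)
    linarith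
  unfold Fgen at h1 h2
  set β₁ := 2*A*Real.log s₁ + B with hβ₁
  set β₂ := 2*A*Real.log s₂ + B with hβ₂
  -- the quadratic-and-quartic part is positive
  have hQ1 : 0 ≤ s₁^2*gA + 2*(s₁*t₁)*γ + t₁^2*gB :=
    add_nonneg (add_nonneg (mul_nonneg (sq_nonneg _) hgA)
      (mul_nonneg (mul_nonneg (by norm_num) (mul_nonneg hs₁.le ht₁.le)) hγ))
      (mul_nonneg (sq_nonneg _) hgB)
  have hR1 : 0 ≤ s₁^2*gA + (s₁*t₁)*γ :=
    add_nonneg (mul_nonneg (sq_nonneg _) hgA) (mul_nonneg (mul_nonneg hs₁.le ht₁.le) hγ)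
  have hE₁pos : 0 < s₁^2*α + (s₁*t₁)*c
      + b*(s₁^2*gA + 2*(s₁*t₁)*γ + t₁^2*gB)*(s₁^2*gA + (s₁*t₁)*γ) := by
    have := mul_nonneg (mul_nonneg hb.le hQ1) hR1
    nlinarith [mul_pos (mul_pos hs₁ hs₁) hα, mul_nonneg (mul_nonneg hs₁.le ht₁.le) hc]
  have hsp₁ : 0 < s₁ ^ p := Real.rpow_pos_of_pos hs₁ _
  have hsp₂ : 0 < s₂ ^ p := Real.rpow_pos_of_pos hs₂ _
  have hβ₁pos : 0 < β₁ := by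
    have he : s₁ ^ p * β₁ = s₁^2*α + (s₁*t₁)*c
        + b*(s₁^2*gA + 2*(s₁*t₁)*γ + t₁^2*gB)*(s₁^2*gA + (s₁*t₁)*γ) := by linarith [h1]
    have hmul : 0 < s₁ ^ p * β₁ := by rw [he]; exact hE₁pos
    by_contra hβ
    push_neg at hβ
    have : s₁ ^ p * β₁ ≤ 0 := mul_nonpos_of_nonneg_of_nonpos hsp₁.le hβ
    linarith
  have hβlt : β₁ < β₂ := by
    have hll : Real.log s₁ < Real.log s₂ := Real.log_lt_log hs₁ (by linarith)
    have := mul_lt_mul_of_pos_left hll (show (0:ℝ) < 2*A by linarith)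
    simp only [hβ₁, hβ₂]
    linarith
  -- bound E₂ < k^4 E₁
  have hE₂lt : s₂^2*α + (s₂*t₂)*c
      + b*(s₂^2*gA + 2*(s₂*t₂)*γ + t₂^2*gB)*(s₂^2*gA + (s₂*t₂)*γ)
      < k^4 * (s₁^2*α + (s₁*t₁)*c
        + b*(s₁^2*gA + 2*(s₁*t₁)*γ + t₁^2*gB)*(s₁^2*gA + (s₁*t₁)*γ)) := by
    have hk2 : 1 < k^2 := by nlinarith
    have hk24' : k^2 < k^4 := by
      have := mul_lt_mul_of_pos_left hk2 (show (0:ℝ) < k^2 by positivity)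
      linarith
    have hs₁α : (0:ℝ) < s₁^2*α := by positivity
    have b1 : s₂^2 = k^2*s₁^2 := by rw [hs2k]; ring
    have b2 : s₂*t₂ ≤ k^2*(s₁*t₁) := by
      have := mul_le_mul_of_nonneg_left ht2k (mul_nonneg hk0.le hs₁.le)
      have e : s₂*t₂ = (k*s₁)*t₂ := by rw [hs2k]
      linarith [e ▸ this]
    have b3 : t₂^2 ≤ k^2*t₁^2 := by
      have := mul_self_le_mul_self ht₂.le ht2k
      nlinarith [this]
    have hA1 : s₂^2*α < k^4*(s₁^2*α) := by
      have := mul_lt_mul_of_pos_right hk24' hs₁α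
      have e : s₂^2*α = k^2*(s₁^2*α) := by rw [b1]; ring
      linarith
    have hA2 : (s₂*t₂)*c ≤ k^4*((s₁*t₁)*c) := by
      have hst₁ : (0:ℝ) ≤ s₁*t₁ := mul_nonneg hs₁.le ht₁.le
      have hk24 : k^2*(s₁*t₁) ≤ k^4*(s₁*t₁) := mul_le_mul_of_nonneg_right hk24'.le hst₁
      have := mul_le_mul_of_nonneg_right (le_trans b2 hk24) hc
      linarith
    have hQle : s₂^2*gA + 2*(s₂*t₂)*γ + t₂^2*gB ≤ k^2*(s₁^2*gA + 2*(s₁*t₁)*γ + t₁^2*gB) := by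
      have k1 := mul_le_mul_of_nonneg_right (le_of_eq b1) hgA
      have k2 := mul_le_mul_of_nonneg_right b2 hγ
      have k3 := mul_le_mul_of_nonneg_right b3 hgB
      linarith
    have hRle : s₂^2*gA + (s₂*t₂)*γ ≤ k^2*(s₁^2*gA + (s₁*t₁)*γ) := by
      have k1 := mul_le_mul_of_nonneg_right (le_of_eq b1) hgA
      have k2 := mul_le_mul_of_nonneg_right b2 hγ
      linarith
    have hQ2' : 0 ≤ s₂^2*gA + 2*(s₂*t₂)*γ + t₂^2*gB :=
      add_nonneg (add_nonneg (mul_nonneg (sq_nonneg _) hgA)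
        (mul_nonneg (mul_nonneg (by norm_num) (mul_nonneg hs₂.le ht₂.le)) hγ))
        (mul_nonneg (sq_nonneg _) hgB)
    have hkQ : 0 ≤ k^2*(s₁^2*gA + 2*(s₁*t₁)*γ + t₁^2*gB) := le_trans hQ2' hQle
    have hprod0 : (s₂^2*gA + 2*(s₂*t₂)*γ + t₂^2*gB)*(s₂^2*gA + (s₂*t₂)*γ)
        ≤ (k^2*(s₁^2*gA + 2*(s₁*t₁)*γ + t₁^2*gB))*(k^2*(s₁^2*gA + (s₁*t₁)*γ)) :=
      mul_le_mul hQle hRle (add_nonneg (mul_nonneg (sq_nonneg _) hgA)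
        (mul_nonneg (mul_nonneg hs₂.le ht₂.le) hγ)) hkQ
    have hprod := mul_le_mul_of_nonneg_left hprod0 hb.le
    have e : b*((k^2*(s₁^2*gA + 2*(s₁*t₁)*γ + t₁^2*gB))*(k^2*(s₁^2*gA + (s₁*t₁)*γ)))
        = k^4*(b*(s₁^2*gA + 2*(s₁*t₁)*γ + t₁^2*gB)*(s₁^2*gA + (s₁*t₁)*γ)) := by ring
    linarith [hprod, e]
  -- convert and contradict
  have hs2p : s₂ ^ p = k ^ p * s₁ ^ p := by
    rw [hs2k, Real.mul_rpow hk0.le hs₁.le]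
  have hk4p : k^(4:ℕ) < k ^ p := by
    have h44 : (k:ℝ)^((4:ℕ):ℝ) = k^(4:ℕ) := Real.rpow_natCast k 4
    rw [← h44]
    exact (Real.rpow_lt_rpow_left_iff hk).2 (by norm_num; linarith)
  have hE1eq : s₁ ^ p * β₁ = s₁^2*α + (s₁*t₁)*c
      + b*(s₁^2*gA + 2*(s₁*t₁)*γ + t₁^2*gB)*(s₁^2*gA + (s₁*t₁)*γ) := by linarith [h1]
  have hE2eq : s₂ ^ p * β₂ = s₂^2*α + (s₂*t₂)*c
      + b*(s₂^2*gA + 2*(s₂*t₂)*γ + t₂^2*gB)*(s₂^2*gA + (s₂*t₂)*γ) := by linarith [h2]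
  have hlt1 : k ^ p * (s₁ ^ p * β₂) < k^4 * (s₁ ^ p * β₁) := by
    rw [← mul_assoc, ← hs2p, hE2eq, hE1eq]
    exact hE₂lt
  have hlt2 : k^4 * (s₁ ^ p * β₁) < k ^ p * (s₁ ^ p * β₂) := by
    have u1 : k^4 * (s₁ ^ p * β₁) < k^4 * (s₁ ^ p * β₂) := by
      have : (0:ℝ) < k^4 := by positivity
      nlinarith [hsp₁]
    have u2 : k^4 * (s₁ ^ p * β₂) < k ^ p * (s₁ ^ p * β₂) := by
      have : 0 < s₁ ^ p * β₂ := mul_pos hsp₁ (lt_trans hβ₁pos hβlt)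
      nlinarith [hk4p]
    linarith
  linarith
set_option maxHeartbeats 1000000 in
lemma exists_unique_pair (b p : ℝ) (hb : 0 < b) (hp : 6 < p)
    (α₁ α₂ A₁ A₂ B₁ B₂ c γ g₁ g₂ : ℝ)
    (hα₁ : 0 < α₁) (hα₂ : 0 < α₂) (hA₁ : 0 < A₁) (hA₂ : 0 < A₂)
    (hc : 0 ≤ c) (hγ : 0 ≤ γ) (hg₁ : 0 ≤ g₁) (hg₂ : 0 ≤ g₂) :
    ∃! st : ℝ × ℝ, 0 < st.1 ∧ 0 < st.2 ∧
      Fgen b p α₁ A₁ B₁ c γ g₁ g₂ st.1 st.2 = 0 ∧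
      Fgen b p α₂ A₂ B₂ c γ g₂ g₁ st.2 st.1 = 0 := by
  have hp0 : p ≠ 0 := by intro h; rw [h] at hp; linarith
  -- === uniqueness of solutions ===
  have huniq : ∀ s₁ t₁ s₂ t₂ : ℝ, 0 < s₁ → 0 < t₁ → 0 < s₂ → 0 < t₂ →
      Fgen b p α₁ A₁ B₁ c γ g₁ g₂ s₁ t₁ = 0 → Fgen b p α₂ A₂ B₂ c γ g₂ g₁ t₁ s₁ = 0 →
      Fgen b p α₁ A₁ B₁ c γ g₁ g₂ s₂ t₂ = 0 → Fgen b p α₂ A₂ B₂ c γ g₂ g₁ t₂ s₂ = 0 →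
      s₁ = s₂ ∧ t₁ = t₂ := by
    intro s₁ t₁ s₂ t₂ hs₁ ht₁ hs₂ ht₂ hF1 hG1 hF2 hG2
    rcases le_total (t₂*s₁) (t₁*s₂) with hr | hr
    · rcases le_total s₁ s₂ with hs | hs
      · have hseq : s₁ = s₂ :=
          le_antisymm hs (Fgen_inj hb hp hα₁ hA₁ hc hγ hg₁ hg₂ hs₁ ht₁ hs₂ ht₂ hF1 hF2 hs hr)
        subst hseq
        have htle : t₂ ≤ t₁ := (mul_le_mul_iff_left₀ hs₁).1 hr
        have hteq : t₁ ≤ t₂ :=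
          Fgen_inj hb hp hα₂ hA₂ hc hγ hg₂ hg₁ ht₂ hs₁ ht₁ hs₁ hG2 hG1 htle
            (mul_le_mul_of_nonneg_left htle hs₁.le)
        exact ⟨rfl, le_antisymm hteq htle⟩
      · have htle : t₂ ≤ t₁ := by
          have h1 : t₂*s₁ ≤ t₁*s₁ := le_trans hr (mul_le_mul_of_nonneg_left hs ht₁.le)
          exact (mul_le_mul_iff_left₀ hs₁).1 h1
        have hteq : t₁ ≤ t₂ :=
          Fgen_inj hb hp hα₂ hA₂ hc hγ hg₂ hg₁ ht₂ hs₂ ht₁ hs₁ hG2 hG1 htle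
            (by linarith [hr])
        have ht12 : t₁ = t₂ := le_antisymm hteq htle
        subst ht12
        have hsle : s₁ ≤ s₂ := (mul_le_mul_iff_right₀ ht₁).1 hr
        exact ⟨le_antisymm hsle hs, rfl⟩
    · rcases le_total s₂ s₁ with hs | hs
      · have hseq : s₂ = s₁ :=
          le_antisymm hs (Fgen_inj hb hp hα₁ hA₁ hc hγ hg₁ hg₂ hs₂ ht₂ hs₁ ht₁ hF2 hF1 hs hr)
        subst hseq
        have htle : t₁ ≤ t₂ := (mul_le_mul_iff_left₀ hs₂).1 hr
        have hteq : t₂ ≤ t₁ :=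
          Fgen_inj hb hp hα₂ hA₂ hc hγ hg₂ hg₁ ht₁ hs₂ ht₂ hs₂ hG1 hG2 htle
            (mul_le_mul_of_nonneg_left htle hs₂.le)
        exact ⟨rfl, le_antisymm htle hteq⟩
      · have htle : t₁ ≤ t₂ := by
          have h1 : t₁*s₂ ≤ t₂*s₂ := le_trans hr (mul_le_mul_of_nonneg_left hs ht₂.le)
          exact (mul_le_mul_iff_left₀ hs₂).1 h1
        have hteq : t₂ ≤ t₁ :=
          Fgen_inj hb hp hα₂ hA₂ hc hγ hg₂ hg₁ ht₁ hs₁ ht₂ hs₂ hG1 hG2 htle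
            (by linarith [hr])
        have ht12 : t₂ = t₁ := le_antisymm hteq htle
        subst ht12
        have hsle : s₂ ≤ s₁ := (mul_le_mul_iff_right₀ ht₂).1 hr
        exact ⟨le_antisymm hs hsle, rfl⟩
  -- === existence ===
  set d₁ := Real.exp (-B₁/(2*A₁)) with hd₁def
  set d₂ := Real.exp (-B₂/(2*A₂)) with hd₂def
  have hd₁ : 0 < d₁ := Real.exp_pos _
  have hd₂ : 0 < d₂ := Real.exp_pos _
  set d := min d₁ d₂ with hddef
  have hd : 0 < d := lt_min hd₁ hd₂
  set C₁ := (α₁+c) + b*((g₁+2*γ+g₂)*(g₁+γ)) with hC₁def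
  set C₂ := (α₂+c) + b*((g₂+2*γ+g₁)*(g₂+γ)) with hC₂def
  obtain ⟨R₀, hR₀all⟩ : ∃ R₀ : ℝ, ((1 ≤ R₀ ∧ d < R₀) ∧
      (A₁ ≤ 2*A₁*Real.log R₀ + B₁ ∧ A₂ ≤ 2*A₂*Real.log R₀ + B₂)) ∧
      (8*C₁ < R₀^(p-4)*A₁ ∧ 8*C₂ < R₀^(p-4)*A₂) := by
    have e1 : ∀ᶠ x : ℝ in atTop, 1 ≤ x := eventually_ge_atTop 1
    have e2 : ∀ᶠ x : ℝ in atTop, d < x := eventually_gt_atTop d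
    have e3 : ∀ᶠ x : ℝ in atTop, A₁ ≤ 2*A₁*Real.log x + B₁ := by
      filter_upwards [Real.tendsto_log_atTop.eventually_ge_atTop ((A₁-B₁)/(2*A₁))] with x hx
      have h2A : (0:ℝ) < 2*A₁ := by linarith
      have h5 := mul_le_mul_of_nonneg_left hx h2A.le
      have e : 2*A₁*((A₁-B₁)/(2*A₁)) = A₁ - B₁ := by field_simp
      rw [e] at h5
      linarith
    have e4 : ∀ᶠ x : ℝ in atTop, A₂ ≤ 2*A₂*Real.log x + B₂ := by
      filter_upwards [Real.tendsto_log_atTop.eventually_ge_atTop ((A₂-B₂)/(2*A₂))] with x hx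
      have h2A : (0:ℝ) < 2*A₂ := by linarith
      have h5 := mul_le_mul_of_nonneg_left hx h2A.le
      have e : 2*A₂*((A₂-B₂)/(2*A₂)) = A₂ - B₂ := by field_simp
      rw [e] at h5
      linarith
    have e5 : ∀ᶠ x : ℝ in atTop, 8*C₁ < x^(p-4)*A₁ := by
      filter_upwards [(tendsto_rpow_atTop (show (0:ℝ) < p-4 by linarith)).eventually_gt_atTop
        (8*C₁/A₁)] with x hx
      rw [div_lt_iff₀ hA₁] at hx
      linarith
    have e6 : ∀ᶠ x : ℝ in atTop, 8*C₂ < x^(p-4)*A₂ := by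
      filter_upwards [(tendsto_rpow_atTop (show (0:ℝ) < p-4 by linarith)).eventually_gt_atTop
        (8*C₂/A₂)] with x hx
      rw [div_lt_iff₀ hA₂] at hx
      linarith
    exact (((e1.and e2).and (e3.and e4)).and (e5.and e6)).exists
  obtain ⟨⟨⟨hR₀1, hdR₀⟩, hlog1, hlog2⟩, hbig1, hbig2⟩ := hR₀all
  have hR₀pos : (0:ℝ) < R₀ := lt_of_lt_of_le one_pos hR₀1
  set R := 2*R₀ with hRdef
  set ε := d/2 with hεdef
  have hε : 0 < ε := by positivity
  have hεd : ε < d := by rw [hεdef]; linarith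
  have hR₀R : R₀ < R := by rw [hRdef]; linarith
  have hεR : ε < R := by linarith
  have hdd₁ : d ≤ d₁ := min_le_left _ _
  have hdd₂ : d ≤ d₂ := min_le_right _ _
  set K : Set (ℝ×ℝ) := Set.Icc ε R ×ˢ Set.Icc ε R with hKdef
  have hKc : IsCompact K := isCompact_Icc.prod isCompact_Icc
  have hKne : K.Nonempty := ⟨(ε, ε), ⟨⟨le_rfl, hεR.le⟩, ⟨le_rfl, hεR.le⟩⟩⟩
  have hcont : ContinuousOn (fun z : ℝ×ℝ => Phi b p α₁ α₂ A₁ A₂ B₁ B₂ c γ g₁ g₂ z.1 z.2) K := by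
    intro z hz
    have hz1 : 0 < z.1 := lt_of_lt_of_le hε hz.1.1
    have hz2 : 0 < z.2 := lt_of_lt_of_le hε hz.2.1
    refine ContinuousAt.continuousWithinAt ?_
    have hfst : ContinuousAt (fun w : ℝ×ℝ => w.1) z := continuousAt_fst
    have hsnd : ContinuousAt (fun w : ℝ×ℝ => w.2) z := continuousAt_snd
    have hc1 : ContinuousAt (fun w : ℝ×ℝ => w.1 ^ p) z :=
      (Real.continuousAt_rpow_const z.1 p (Or.inl hz1.ne')).comp continuousAt_fst
    have hc2 : ContinuousAt (fun w : ℝ×ℝ => w.2 ^ p) z :=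
      (Real.continuousAt_rpow_const z.2 p (Or.inl hz2.ne')).comp continuousAt_snd
    have hl1 : ContinuousAt (fun w : ℝ×ℝ => Real.log w.1) z :=
      (Real.continuousAt_log hz1.ne').comp continuousAt_fst
    have hl2 : ContinuousAt (fun w : ℝ×ℝ => Real.log w.2) z :=
      (Real.continuousAt_log hz2.ne').comp continuousAt_snd
    show ContinuousAt (fun w : ℝ×ℝ =>
      (1/2)*w.1^2*α₁ + (1/2)*w.2^2*α₂ + (w.1*w.2)*c
      + (b/4)*(w.1^2*g₁ + 2*(w.1*w.2)*γ + w.2^2*g₂)^2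
      + (2/p^2)*(w.1 ^ p * A₁ + w.2 ^ p * A₂)
      - (1/p)*(w.1 ^ p * (2*A₁*Real.log w.1 + B₁) + w.2 ^ p * (2*A₂*Real.log w.2 + B₂))) z
    exact ((((((continuousAt_const.mul (hfst.pow 2)).mul continuousAt_const).add
      ((continuousAt_const.mul (hsnd.pow 2)).mul continuousAt_const)).add
      ((hfst.mul hsnd).mul continuousAt_const)).add
      (continuousAt_const.mul (((((hfst.pow 2).mul continuousAt_const).add
        ((continuousAt_const.mul (hfst.mul hsnd)).mul continuousAt_const)).add
        ((hsnd.pow 2).mul continuousAt_const)).pow 2))).add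
      (continuousAt_const.mul ((hc1.mul continuousAt_const).add
        (hc2.mul continuousAt_const)))).sub
      (continuousAt_const.mul
        ((hc1.mul ((continuousAt_const.mul hl1).add continuousAt_const)).add
         (hc2.mul ((continuousAt_const.mul hl2).add continuousAt_const))))
  obtain ⟨z, hzK, hzmax⟩ := hKc.exists_isMaxOn hKne hcont
  have hz1I : z.1 ∈ Set.Icc ε R := hzK.1
  have hz2I : z.2 ∈ Set.Icc ε R := hzK.2
  have hz1pos : 0 < z.1 := lt_of_lt_of_le hε hz1I.1
  have hz2pos : 0 < z.2 := lt_of_lt_of_le hε hz2I.1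
  have hmax : ∀ w ∈ K, Phi b p α₁ α₂ A₁ A₂ B₁ B₂ c γ g₁ g₂ w.1 w.2
      ≤ Phi b p α₁ α₂ A₁ A₂ B₁ B₂ c γ g₁ g₂ z.1 z.2 := fun w hw => hzmax hw
  -- first coordinate interior
  have hz1_lt : z.1 < R := by
    rcases lt_or_eq_of_le hz1I.2 with hlt | heq
    · exact hlt
    · exfalso
      have hanti : StrictAntiOn (fun σ => Phi b p α₁ α₂ A₁ A₂ B₁ B₂ c γ g₁ g₂ σ z.2)
          (Set.Icc R₀ R) := by
        refine strictAntiOn_of_deriv_neg (convex_Icc _ _) (fun σ hσ => ?_) (fun σ hσ => ?_)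
        · exact (hasDerivAt_Phi b p α₁ α₂ A₁ A₂ B₁ B₂ c γ g₁ g₂ z.2
            (lt_of_lt_of_le hR₀pos hσ.1) hp0).continuousAt.continuousWithinAt
        · rw [interior_Icc] at hσ
          rw [(hasDerivAt_Phi b p α₁ α₂ A₁ A₂ B₁ B₂ c γ g₁ g₂ z.2
            (lt_of_lt_of_le hR₀pos hσ.1.le) hp0).deriv]
          exact Fd_neg hb hp hα₁ hA₁ hc hγ hg₁ hg₂ hR₀1 hlog1 hbig1
            hσ.1.le hσ.2.le hz2pos.le hz2I.2
      have hstep := hanti ⟨le_rfl, hR₀R.le⟩ ⟨hR₀R.le, le_rfl⟩ hR₀R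
      have hcmp := hmax (R₀, z.2) ⟨⟨by linarith, hR₀R.le⟩, hz2I⟩
      simp only at hstep hcmp
      rw [heq] at hcmp
      linarith
  have hz1_gt : ε < z.1 := by
    rcases lt_or_eq_of_le hz1I.1 with hlt | heq
    · exact hlt
    · exfalso
      have hmono : StrictMonoOn (fun σ => Phi b p α₁ α₂ A₁ A₂ B₁ B₂ c γ g₁ g₂ σ z.2)
          (Set.Icc ε d) := by
        refine strictMonoOn_of_deriv_pos (convex_Icc _ _) (fun σ hσ => ?_) (fun σ hσ => ?_)
        · exact (hasDerivAt_Phi b p α₁ α₂ A₁ A₂ B₁ B₂ c γ g₁ g₂ z.2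
            (lt_of_lt_of_le hε hσ.1) hp0).continuousAt.continuousWithinAt
        · rw [interior_Icc] at hσ
          rw [(hasDerivAt_Phi b p α₁ α₂ A₁ A₂ B₁ B₂ c γ g₁ g₂ z.2
            (lt_trans hε hσ.1) hp0).deriv]
          exact Fd_pos hb hα₁ hA₁ hc hγ hg₁ hg₂ (lt_trans hε hσ.1)
            (lt_of_lt_of_le hσ.2 hdd₁) hz2pos.le
      have hstep := hmono ⟨le_rfl, hεd.le⟩ ⟨hεd.le, le_rfl⟩ hεd
      have hcmp := hmax (d, z.2) ⟨⟨hεd.le, by linarith⟩, hz2I⟩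
      simp only at hstep hcmp
      rw [← heq] at hcmp
      linarith
  -- second coordinate interior (by symmetry)
  have hmax2 : ∀ τ ∈ Set.Icc ε R, Phi b p α₂ α₁ A₂ A₁ B₂ B₁ c γ g₂ g₁ τ z.1
      ≤ Phi b p α₂ α₁ A₂ A₁ B₂ B₁ c γ g₂ g₁ z.2 z.1 := by
    intro τ hτ
    have hmm := hmax (z.1, τ) ⟨hz1I, hτ⟩
    simp only at hmm
    calc Phi b p α₂ α₁ A₂ A₁ B₂ B₁ c γ g₂ g₁ τ z.1
        = Phi b p α₁ α₂ A₁ A₂ B₁ B₂ c γ g₁ g₂ z.1 τ :=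
          (Phi_swap b p α₁ α₂ A₁ A₂ B₁ B₂ c γ g₁ g₂ z.1 τ).symm
      _ ≤ Phi b p α₁ α₂ A₁ A₂ B₁ B₂ c γ g₁ g₂ z.1 z.2 := hmm
      _ = Phi b p α₂ α₁ A₂ A₁ B₂ B₁ c γ g₂ g₁ z.2 z.1 :=
          Phi_swap b p α₁ α₂ A₁ A₂ B₁ B₂ c γ g₁ g₂ z.1 z.2
  have hz2_lt : z.2 < R := by
    rcases lt_or_eq_of_le hz2I.2 with hlt | heq
    · exact hlt
    · exfalso
      have hanti : StrictAntiOn (fun σ => Phi b p α₂ α₁ A₂ A₁ B₂ B₁ c γ g₂ g₁ σ z.1)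
          (Set.Icc R₀ R) := by
        refine strictAntiOn_of_deriv_neg (convex_Icc _ _) (fun σ hσ => ?_) (fun σ hσ => ?_)
        · exact (hasDerivAt_Phi b p α₂ α₁ A₂ A₁ B₂ B₁ c γ g₂ g₁ z.1
            (lt_of_lt_of_le hR₀pos hσ.1) hp0).continuousAt.continuousWithinAt
        · rw [interior_Icc] at hσ
          rw [(hasDerivAt_Phi b p α₂ α₁ A₂ A₁ B₂ B₁ c γ g₂ g₁ z.1
            (lt_of_lt_of_le hR₀pos hσ.1.le) hp0).deriv]
          exact Fd_neg hb hp hα₂ hA₂ hc hγ hg₂ hg₁ hR₀1 hlog2 hbig2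
            hσ.1.le hσ.2.le hz1pos.le hz1I.2
      have hstep := hanti ⟨le_rfl, hR₀R.le⟩ ⟨hR₀R.le, le_rfl⟩ hR₀R
      have hcmp := hmax2 R₀ ⟨by linarith, hR₀R.le⟩
      simp only at hstep hcmp
      rw [heq] at hcmp
      linarith
  have hz2_gt : ε < z.2 := by
    rcases lt_or_eq_of_le hz2I.1 with hlt | heq
    · exact hlt
    · exfalso
      have hmono : StrictMonoOn (fun σ => Phi b p α₂ α₁ A₂ A₁ B₂ B₁ c γ g₂ g₁ σ z.1)
          (Set.Icc ε d) := by
        refine strictMonoOn_of_deriv_pos (convex_Icc _ _) (fun σ hσ => ?_) (fun σ hσ => ?_)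
        · exact (hasDerivAt_Phi b p α₂ α₁ A₂ A₁ B₂ B₁ c γ g₂ g₁ z.1
            (lt_of_lt_of_le hε hσ.1) hp0).continuousAt.continuousWithinAt
        · rw [interior_Icc] at hσ
          rw [(hasDerivAt_Phi b p α₂ α₁ A₂ A₁ B₂ B₁ c γ g₂ g₁ z.1
            (lt_trans hε hσ.1) hp0).deriv]
          exact Fd_pos hb hα₂ hA₂ hc hγ hg₂ hg₁ (lt_trans hε hσ.1)
            (lt_of_lt_of_le hσ.2 hdd₂) hz1pos.le
      have hstep := hmono ⟨le_rfl, hεd.le⟩ ⟨hεd.le, le_rfl⟩ hεd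
      have hcmp := hmax2 d ⟨hεd.le, by linarith⟩
      simp only at hstep hcmp
      rw [← heq] at hcmp
      linarith
  -- vanishing derivatives
  have hloc1 : IsLocalMax (fun σ => Phi b p α₁ α₂ A₁ A₂ B₁ B₂ c γ g₁ g₂ σ z.2) z.1 := by
    filter_upwards [Ioo_mem_nhds hz1_gt hz1_lt] with σ hσ
    exact hmax (σ, z.2) ⟨⟨hσ.1.le, hσ.2.le⟩, hz2I⟩
  have hFd1 : Fd b p α₁ A₁ B₁ c γ g₁ g₂ z.1 z.2 = 0 :=
    hloc1.hasDerivAt_eq_zero (hasDerivAt_Phi b p α₁ α₂ A₁ A₂ B₁ B₂ c γ g₁ g₂ z.2 hz1pos hp0)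
  have hloc2 : IsLocalMax (fun σ => Phi b p α₂ α₁ A₂ A₁ B₂ B₁ c γ g₂ g₁ σ z.1) z.2 := by
    filter_upwards [Ioo_mem_nhds hz2_gt hz2_lt] with σ hσ
    exact hmax2 σ ⟨hσ.1.le, hσ.2.le⟩
  have hFd2 : Fd b p α₂ A₂ B₂ c γ g₂ g₁ z.2 z.1 = 0 :=
    hloc2.hasDerivAt_eq_zero (hasDerivAt_Phi b p α₂ α₁ A₂ A₁ B₂ B₁ c γ g₂ g₁ z.1 hz2pos hp0)
  refine ⟨z, ⟨hz1pos, hz2pos, ?_, ?_⟩, ?_⟩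
  · rw [Fgen_eq_mul hz1pos, hFd1, mul_zero]
  · rw [Fgen_eq_mul hz2pos, hFd2, mul_zero]
  · rintro y ⟨hy1, hy2, hyF, hyG⟩
    have hzF : Fgen b p α₁ A₁ B₁ c γ g₁ g₂ z.1 z.2 = 0 := by
      rw [Fgen_eq_mul hz1pos, hFd1, mul_zero]
    have hzG : Fgen b p α₂ A₂ B₂ c γ g₂ g₁ z.2 z.1 = 0 := by
      rw [Fgen_eq_mul hz2pos, hFd2, mul_zero]
    have := huniq y.1 y.2 z.1 z.2 hy1 hy2 hz1pos hz2pos hyF hyG hzF hzG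
    exact Prod.ext this.1 this.2


/-- existence and uniqueness of (s_u, t_u) with s_u u⁺ + t_u u⁻ ∈ M_λ. -/
theorem stmt12 (a b p lam : ℝ) (ha : 0 < a) (hb : 0 < b) (hp : 6 < p) (hlam : 0 < lam)
    (h : V → ℝ) (hh : ∀ x, 0 ≤ h x) (u : V → ℝ) (hu : memH h u)
    (hup : pos u ≠ 0) (hun : neg u ≠ 0) :
    ∃! st : ℝ × ℝ, 0 < st.1 ∧ 0 < st.2 ∧
      Jp a b p lam h (fun x => st.1 * pos u x + st.2 * neg u x)
        (fun x => st.1 * pos u x) = 0 ∧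
      Jp a b p lam h (fun x => st.1 * pos u x + st.2 * neg u x)
        (fun x => st.2 * neg u x) = 0 := by
  classical
  have hp0 : p ≠ 0 := by intro h0; rw [h0] at hp; linarith
  obtain ⟨x₁, hx₁⟩ : ∃ x, pos u x ≠ 0 := by
    by_contra hcon
    push_neg at hcon
    exact hup (funext hcon)
  obtain ⟨x₂, hx₂⟩ : ∃ x, neg u x ≠ 0 := by
    by_contra hcon
    push_neg at hcon
    exact hun (funext hcon)
  -- summability facts
  have Sc := summable_gradSq_pos hu
  have Sd := summable_gradSq_neg hu
  have Sb := summable_gradForm_pn hu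
  have SbNP : Summable (fun x => gradForm (neg u) (pos u) x) :=
    Sb.congr (fun x => gradForm_comm (pos u) (neg u) x)
  have ShlP := summable_hl_sq hlam hh hu (pos u) (abs_pos_le u)
  have ShlN := summable_hl_sq hlam hh hu (neg u) (abs_neg_le u)
  have SaP : Summable (fun x => a * gradSq (pos u) x + hl lam h x * (pos u x)^2) :=
    (Sc.mul_left a).add ShlP
  have SaN : Summable (fun x => a * gradSq (neg u) x + hl lam h x * (neg u x)^2) :=
    (Sd.mul_left a).add ShlN
  have SeP := summable_abs_rpow hp hu (pos u) (abs_pos_le u)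
  have SeN := summable_abs_rpow hp hu (neg u) (abs_neg_le u)
  have SfP := summable_logTerm hp hu (pos u) (abs_pos_le u)
  have SfN := summable_logTerm hp hu (neg u) (abs_neg_le u)
  -- the constants
  set γ := ∑' x : V, gradForm (pos u) (neg u) x with hγdef
  set g₁ := ∑' x : V, gradSq (pos u) x with hg₁def
  set g₂ := ∑' x : V, gradSq (neg u) x with hg₂def
  set α₁ := ∑' x : V, (a * gradSq (pos u) x + hl lam h x * (pos u x)^2) with hα₁def
  set α₂ := ∑' x : V, (a * gradSq (neg u) x + hl lam h x * (neg u x)^2) with hα₂def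
  set A₁ := ∑' x : V, |pos u x| ^ p with hA₁def
  set A₂ := ∑' x : V, |neg u x| ^ p with hA₂def
  set B₁ := ∑' x : V, logTerm p (pos u x) with hB₁def
  set B₂ := ∑' x : V, logTerm p (neg u x) with hB₂def
  -- positivity
  have hhl0 : ∀ x, (0:ℝ) < hl lam h x := fun x => by
    unfold hl
    nlinarith [hh x, hlam.le]
  have hα₁pos : 0 < α₁ := by
    refine Summable.tsum_pos SaP (fun x => add_nonneg (mul_nonneg ha.le (gradSq_nonneg _ _))
      (mul_nonneg (hhl0 x).le (sq_nonneg _))) x₁ ?_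
    have h2 : 0 < (pos u x₁)^2 := lt_of_le_of_ne (sq_nonneg _) (Ne.symm (pow_ne_zero 2 hx₁))
    have := mul_pos (hhl0 x₁) h2
    have := mul_nonneg ha.le (gradSq_nonneg (pos u) x₁)
    linarith
  have hα₂pos : 0 < α₂ := by
    refine Summable.tsum_pos SaN (fun x => add_nonneg (mul_nonneg ha.le (gradSq_nonneg _ _))
      (mul_nonneg (hhl0 x).le (sq_nonneg _))) x₂ ?_
    have h2 : 0 < (neg u x₂)^2 := lt_of_le_of_ne (sq_nonneg _) (Ne.symm (pow_ne_zero 2 hx₂))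
    have := mul_pos (hhl0 x₂) h2
    have := mul_nonneg ha.le (gradSq_nonneg (neg u) x₂)
    linarith
  have hA₁pos : 0 < A₁ :=
    Summable.tsum_pos SeP (fun x => Real.rpow_nonneg (abs_nonneg _) p) x₁
      (Real.rpow_pos_of_pos (abs_pos.2 hx₁) p)
  have hA₂pos : 0 < A₂ :=
    Summable.tsum_pos SeN (fun x => Real.rpow_nonneg (abs_nonneg _) p) x₂
      (Real.rpow_pos_of_pos (abs_pos.2 hx₂) p)
  have hγnn : 0 ≤ γ := tsum_nonneg (gradForm_pn_nonneg u)
  have hg₁nn : 0 ≤ g₁ := tsum_nonneg (gradSq_nonneg (pos u))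
  have hg₂nn : 0 ≤ g₂ := tsum_nonneg (gradSq_nonneg (neg u))
  -- the key identity
  have hiff1 : ∀ s t : ℝ, 0 < s → 0 < t →
      Jp a b p lam h (fun x => s * pos u x + t * neg u x) (fun x => s * pos u x)
        = Fgen b p α₁ A₁ B₁ (a*γ) γ g₁ g₂ s t := by
    intro s t hs ht
    rw [Jp_expand a b p lam s t hs ht hp0 h (pos u) (neg u) (pos_mul_neg u) SaP Sb Sc Sd SeP SfP]
    unfold Fgen
    rw [← hγdef, ← hg₁def, ← hg₂def, ← hα₁def, ← hA₁def, ← hB₁def]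
    ring
  have hiff2 : ∀ s t : ℝ, 0 < s → 0 < t →
      Jp a b p lam h (fun x => s * pos u x + t * neg u x) (fun x => t * neg u x)
        = Fgen b p α₂ A₂ B₂ (a*γ) γ g₂ g₁ t s := by
    intro s t hs ht
    have hw : (fun x => s * pos u x + t * neg u x)
        = (fun x => t * neg u x + s * pos u x) := by funext x; ring
    rw [hw, Jp_expand a b p lam t s ht hs hp0 h (neg u) (pos u)
      (fun x => by rw [mul_comm]; exact pos_mul_neg u x) SaN SbNP Sd Sc SeN SfN]
    have hcomm : (∑' x : V, gradForm (neg u) (pos u) x) = γ := by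
      rw [hγdef]
      exact tsum_congr (fun x => gradForm_comm (neg u) (pos u) x)
    unfold Fgen
    rw [hcomm, ← hg₁def, ← hg₂def, ← hα₂def, ← hA₂def, ← hB₂def]
    ring
  -- apply the abstract result
  obtain ⟨z, ⟨hz1, hz2, hzF, hzG⟩, hzuniq⟩ :=
    exists_unique_pair b p hb hp α₁ α₂ A₁ A₂ B₁ B₂ (a*γ) γ g₁ g₂
      hα₁pos hα₂pos hA₁pos hA₂pos (mul_nonneg ha.le hγnn) hγnn hg₁nn hg₂nn
  refine ⟨z, ⟨hz1, hz2, ?_, ?_⟩, ?_⟩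
  · rw [hiff1 z.1 z.2 hz1 hz2]; exact hzF
  · rw [hiff2 z.1 z.2 hz1 hz2]; exact hzG
  · rintro y ⟨hy1, hy2, hyF, hyG⟩
    apply hzuniq
    refine ⟨hy1, hy2, ?_, ?_⟩
    · rw [← hiff1 y.1 y.2 hy1 hy2]; exact hyF
    · rw [← hiff2 y.1 y.2 hy1 hy2]; exact hyG

end DiscreteKirchhoff
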